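/- Let G act on a polysymplectic manifold (M, ω¹,…,ωᵏ) by a polysymplectic action with Coad^k-equivariant momentum map J = (J¹,…,Jᵏ): M → (g*)^k, let μ be a regular value of J, and let m ∈ J⁻¹(μ). Then T_m(J⁻¹(μ)) equals the polysymplectic orthogonal T_m^{⊥,k}(G·m) of the tangent space to the G-orbit, i.e. X ∈ T_m(J⁻¹(μ)) iff ω^A(m)(X, ξ_M(m)) = 0 for all ξ ∈ g and all A = 1,…,k. -/
import Mathlib


/-- linearized at `m ∈ J⁻¹(μ)`: on the tangent space `T_mM` (a finite-
dimensional vector space `T`), with `ω A` the polysymplectic forms at `m`,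
`σ : 𝔤 → T` the infinitesimal generator map (so `T_m(G·m) = range σ`), and
`J' A = T_m J^A : T → 𝔤*` the differentials of the momentum map components, the momentum
map condition `ω^A(ξ_M(m), X) = dĴ^A_ξ(X)` implies that
`T_m(J⁻¹(μ)) = ⋂_A ker J'^A` equals the polysymplectic orthogonal `T_m^{⊥,k}(G·m)`. -/
theorem tangent_level_set_eq_polysymplectic_orthogonal_of_orbit
    {𝔤 T : Type*} [AddCommGroup 𝔤] [Module ℝ 𝔤] [FiniteDimensional ℝ 𝔤]
    [AddCommGroup T] [Module ℝ T] [FiniteDimensional ℝ T]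
    {k : ℕ} (ω : Fin k → T →ₗ[ℝ] T →ₗ[ℝ] ℝ)
    (hskew : ∀ A (v w : T), ω A v w = - ω A w v)
    (σ : 𝔤 →ₗ[ℝ] T)
    (J' : Fin k → T →ₗ[ℝ] Module.Dual ℝ 𝔤)
    (hmom : ∀ A (ξ : 𝔤) (X : T), ω A (σ ξ) X = J' A X ξ) :
    {X : T | ∀ A, J' A X = 0} =
      {X : T | ∀ A (ξ : 𝔤), ω A X (σ ξ) = 0} := by
  ext X
  simp only [Set.mem_setOf_eq]
  constructor
  · intro h A ξ
    rw [hskew, hmom, h A]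
    simp
  · intro h A
    ext ξ
    have := h A ξ
    rw [hskew, hmom] at this
    simpa using this
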